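/- Let $m \geq 1$ and $n \geq 1$ be integers and let $P_1, \dots, P_r$ be non-zero real polynomials whose product $P = P_1 \cdots P_r$ has degree at most $n$. Then $e^{-n} H(P_1) \cdots H(P_r) < H(P) < e^{n} H(P_1) \cdots H(P_r)$, where $H(Q)$ denotes the maximum of the absolute values of the coefficients of $Q$ (Gelfond's Lemma). -/

import Mathlib

open Polynomial Finset

open Polynomial Finset

/-- Naive height of a real polynomial: the maximum of the absolute values of its
coefficients. -/
noncomputable def heightR (P : Polynomial ℝ) : ℝ := ⨆ i : ℕ, |P.coeff i|

noncomputable def L1 (Q : Polynomial ℝ) : ℝ := ∑ k ∈ Finset.range (Q.natDegree + 1), |Q.coeff k|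

lemma L1_eq (Q : Polynomial ℝ) {m : ℕ} (hm : Q.natDegree < m) :
    ∑ k ∈ Finset.range m, |Q.coeff k| = L1 Q := by
  rw [L1, eq_comm]
  apply Finset.sum_subset
  · intro x hx; simp only [Finset.mem_range] at *; omega
  · intro x _ hx
    simp only [Finset.mem_range, not_lt] at hx
    rw [Q.coeff_eq_zero_of_natDegree_lt (by omega), abs_zero]

lemma abs_coeff_le_L1 (Q : Polynomial ℝ) (i : ℕ) : |Q.coeff i| ≤ L1 Q := by
  rw [← L1_eq Q (lt_of_le_of_lt (Nat.le_max_left _ i) (Nat.lt_succ_self _))]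
  exact Finset.single_le_sum (f := fun k => |Q.coeff k|) (fun k _ => abs_nonneg _)
    (Finset.mem_range.2 (by omega))

lemma heightR_bdd (Q : Polynomial ℝ) : BddAbove (Set.range fun i => |Q.coeff i|) :=
  ⟨L1 Q, by rintro x ⟨i, rfl⟩; exact abs_coeff_le_L1 Q i⟩

lemma abs_coeff_le_heightR (Q : Polynomial ℝ) (i : ℕ) : |Q.coeff i| ≤ heightR Q :=
  le_ciSup (heightR_bdd Q) i

lemma heightR_le {Q : Polynomial ℝ} {b : ℝ} (h : ∀ i, |Q.coeff i| ≤ b) : heightR Q ≤ b :=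
  ciSup_le h

lemma heightR_nonneg (Q : Polynomial ℝ) : 0 ≤ heightR Q :=
  le_trans (abs_nonneg _) (abs_coeff_le_heightR Q 0)

lemma heightR_pos {Q : Polynomial ℝ} (h : Q ≠ 0) : 0 < heightR Q :=
  lt_of_lt_of_le (abs_pos.2 (Polynomial.leadingCoeff_ne_zero.2 h)) (abs_coeff_le_heightR Q _)

lemma L1_nonneg (Q : Polynomial ℝ) : 0 ≤ L1 Q :=
  Finset.sum_nonneg fun _ _ => abs_nonneg _

lemma L1_le (Q : Polynomial ℝ) : L1 Q ≤ (Q.natDegree + 1) * heightR Q := by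
  calc L1 Q ≤ ∑ _k ∈ Finset.range (Q.natDegree + 1), heightR Q :=
        Finset.sum_le_sum fun i _ => abs_coeff_le_heightR Q i
    _ = (Q.natDegree + 1) * heightR Q := by
        rw [Finset.sum_const, Finset.card_range, nsmul_eq_mul]; push_cast; ring

lemma coeff_mul_le (Q R : Polynomial ℝ) (k : ℕ) :
    |(Q * R).coeff k| ≤ L1 Q * heightR R := by
  rw [Polynomial.coeff_mul]
  calc |∑ x ∈ antidiagonal k, Q.coeff x.1 * R.coeff x.2|
      ≤ ∑ x ∈ antidiagonal k, |Q.coeff x.1 * R.coeff x.2| := Finset.abs_sum_le_sum_abs _ _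
    _ ≤ ∑ x ∈ antidiagonal k, |Q.coeff x.1| * heightR R := by
        refine Finset.sum_le_sum fun x _ => ?_
        rw [abs_mul]
        exact mul_le_mul_of_nonneg_left (abs_coeff_le_heightR R x.2) (abs_nonneg _)
    _ = (∑ i ∈ Finset.range (k+1), |Q.coeff i|) * heightR R := by
        rw [← Finset.sum_mul, Finset.Nat.sum_antidiagonal_eq_sum_range_succ_mk]
    _ ≤ L1 Q * heightR R := by
        refine mul_le_mul_of_nonneg_right ?_ (heightR_nonneg R)
        calc ∑ i ∈ Finset.range (k+1), |Q.coeff i|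
            ≤ ∑ i ∈ Finset.range (max (k+1) (Q.natDegree+1)), |Q.coeff i| :=
              Finset.sum_le_sum_of_subset_of_nonneg
                (Finset.range_subset_range.2 (le_max_left _ _)) (fun _ _ _ => abs_nonneg _)
          _ = L1 Q := L1_eq Q (by omega)

lemma heightR_mul_le (Q R : Polynomial ℝ) : heightR (Q * R) ≤ L1 Q * heightR R :=
  heightR_le fun k => coeff_mul_le Q R k

lemma heightR_one : heightR (1 : Polynomial ℝ) ≤ 1 := by
  refine heightR_le fun i => ?_
  rcases Nat.eq_zero_or_pos i with h | h
  · simp [h]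
  · rw [Polynomial.coeff_one, if_neg (by omega)]; simp

lemma heightR_prod_le {ι : Type*} (s : Finset ι) (P : ι → Polynomial ℝ) :
    heightR (∏ i ∈ s, P i) ≤ ∏ i ∈ s, (((P i).natDegree + 1) * heightR (P i)) := by
  induction s using Finset.cons_induction with
  | empty => simpa using heightR_one
  | cons a s ha ih =>
    rw [Finset.prod_cons, Finset.prod_cons]
    calc heightR (P a * ∏ i ∈ s, P i) ≤ L1 (P a) * heightR (∏ i ∈ s, P i) :=
          heightR_mul_le _ _
      _ ≤ (((P a).natDegree + 1) * heightR (P a)) *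
            ∏ i ∈ s, (((P i).natDegree + 1) * heightR (P i)) := by
          apply mul_le_mul (L1_le (P a)) ih (heightR_nonneg _)
          exact mul_nonneg (by positivity) (heightR_nonneg _)


open Polynomial Finset

noncomputable def msP (a : ℂ) (s : Multiset ℂ) : Polynomial ℂ :=
  C a * (s.map (fun z => X - C z)).prod

noncomputable def Mm (a : ℂ) (s : Multiset ℂ) : ℝ :=
  ‖a‖ * (s.map (fun z => max 1 ‖z‖)).prod

noncomputable def MC (Q : Polynomial ℂ) : ℝ := Mm Q.leadingCoeff Q.roots

noncomputable def Nn (m : ℕ) (Q : Polynomial ℂ) : ℝ :=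
  ∑ k ∈ Finset.range m, ‖Q.coeff k‖ ^ 2

lemma prodfacts_monic (s : Multiset ℂ) : ((s.map (fun z => X - C z)).prod).Monic :=
  monic_multiset_prod_of_monic _ _ (fun z _ => monic_X_sub_C z)

lemma prodfacts_natDegree (s : Multiset ℂ) :
    ((s.map (fun z => X - C z)).prod).natDegree = Multiset.card s :=
  natDegree_multiset_prod_X_sub_C_eq_card s

lemma msP_natDegree {a : ℂ} (ha : a ≠ 0) (s : Multiset ℂ) :
    (msP a s).natDegree = Multiset.card s := by
  rw [msP, natDegree_C_mul ha, prodfacts_natDegree]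

lemma msP_ne_zero {a : ℂ} (ha : a ≠ 0) (s : Multiset ℂ) : msP a s ≠ 0 :=
  mul_ne_zero (by simpa using ha) (prodfacts_monic s).ne_zero

lemma msP_coeff_card (a : ℂ) (s : Multiset ℂ) : (msP a s).coeff (Multiset.card s) = a := by
  rw [msP, coeff_C_mul, ← prodfacts_natDegree s, ← Polynomial.leadingCoeff,
    (prodfacts_monic s).leadingCoeff, mul_one]

lemma one_le_maxprod (s : Multiset ℂ) : 1 ≤ (s.map (fun z => max 1 ‖z‖)).prod := by
  refine Multiset.one_le_prod ?_
  intro x hx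
  rcases Multiset.mem_map.1 hx with ⟨z, _, rfl⟩
  exact le_max_left _ _

lemma Mm_nonneg (a : ℂ) (s : Multiset ℂ) : 0 ≤ Mm a s :=
  mul_nonneg (norm_nonneg _) (le_trans zero_le_one (one_le_maxprod s))

lemma MC_nonneg (Q : Polynomial ℂ) : 0 ≤ MC Q := Mm_nonneg _ _

lemma roots_card_eq {Q : Polynomial ℂ} (hQ : Q ≠ 0) :
    Multiset.card Q.roots = Q.natDegree :=
  (Polynomial.splits_iff_card_roots.1 (IsAlgClosed.splits Q))

lemma msP_repr {Q : Polynomial ℂ} (hQ : Q ≠ 0) : msP Q.leadingCoeff Q.roots = Q :=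
  Polynomial.C_leadingCoeff_mul_prod_multiset_X_sub_C (roots_card_eq hQ)

lemma MC_mul {Q R : Polynomial ℂ} (hQ : Q ≠ 0) (hR : R ≠ 0) :
    MC (Q * R) = MC Q * MC R := by
  unfold MC Mm
  rw [Polynomial.leadingCoeff_mul, Polynomial.roots_mul (mul_ne_zero hQ hR),
    Multiset.map_add, Multiset.prod_add, norm_mul]
  ring

lemma MC_one : MC (1 : Polynomial ℂ) = 1 := by
  unfold MC Mm
  simp [Polynomial.roots_one]

lemma MC_prod {ι : Type*} (s : Finset ι) (f : ι → Polynomial ℂ) (h : ∀ i ∈ s, f i ≠ 0) :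
    MC (∏ i ∈ s, f i) = ∏ i ∈ s, MC (f i) := by
  induction s using Finset.cons_induction with
  | empty => simpa using MC_one
  | cons a s ha ih =>
    rw [Finset.prod_cons, Finset.prod_cons,
      MC_mul (h a (Finset.mem_cons_self a s))
        (Finset.prod_ne_zero_iff.2 fun i hi => h i (Finset.mem_cons_of_mem hi)),
      ih (fun i hi => h i (Finset.mem_cons_of_mem hi))]

open Polynomial Finset

lemma normSq_flip (u v z : ℂ) :
    ‖u - z * v‖ ^ 2 - ‖(starRingEnd ℂ) z * u - v‖ ^ 2
      = (1 - ‖z‖ ^ 2) * (‖u‖ ^ 2 - ‖v‖ ^ 2) := by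
  simp only [← Complex.normSq_eq_norm_sq]
  simp only [Complex.normSq_apply, Complex.sub_re, Complex.sub_im, Complex.mul_re,
    Complex.mul_im, Complex.conj_re, Complex.conj_im]
  ring

lemma shift_sum (S : Polynomial ℂ) {m : ℕ} (hm : S.coeff m = 0) :
    ∑ k ∈ Finset.range (m + 1), ‖(X * S).coeff k‖ ^ 2
      = ∑ k ∈ Finset.range (m + 1), ‖S.coeff k‖ ^ 2 := by
  rw [Finset.sum_range_succ', Finset.sum_range_succ]
  simp [Polynomial.coeff_X_mul, Polynomial.mul_coeff_zero, hm]

lemma flip_N (S : Polynomial ℂ) (z : ℂ) {m : ℕ} (hm : S.coeff m = 0) :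
    (∑ k ∈ Finset.range (m + 1), ‖((X - C z) * S).coeff k‖ ^ 2)
      = ∑ k ∈ Finset.range (m + 1), ‖((C ((starRingEnd ℂ) z) * X - 1) * S).coeff k‖ ^ 2 := by
  have h1 : ∀ k, ((X - C z) * S).coeff k = (X * S).coeff k - z * S.coeff k := by
    intro k
    rw [sub_mul, Polynomial.coeff_sub, Polynomial.coeff_C_mul]
  have h2 : ∀ k, ((C ((starRingEnd ℂ) z) * X - 1) * S).coeff k
      = (starRingEnd ℂ) z * (X * S).coeff k - S.coeff k := by
    intro k
    rw [sub_mul, one_mul, Polynomial.coeff_sub, mul_assoc, Polynomial.coeff_C_mul]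
  have key : (∑ k ∈ Finset.range (m + 1), ‖((X - C z) * S).coeff k‖ ^ 2)
      - (∑ k ∈ Finset.range (m + 1), ‖((C ((starRingEnd ℂ) z) * X - 1) * S).coeff k‖ ^ 2)
      = (1 - ‖z‖ ^ 2) * ((∑ k ∈ Finset.range (m + 1), ‖(X * S).coeff k‖ ^ 2)
          - ∑ k ∈ Finset.range (m + 1), ‖S.coeff k‖ ^ 2) := by
    rw [← Finset.sum_sub_distrib, mul_sub, Finset.mul_sum, Finset.mul_sum,
      ← Finset.sum_sub_distrib]
    refine Finset.sum_congr rfl fun k _ => ?_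
    rw [h1 k, h2 k, normSq_flip, mul_sub]
  rw [shift_sum S hm, sub_self, mul_zero] at key
  linarith [key]

open Polynomial Finset in
lemma landau_ms (c : ℕ) : ∀ (a : ℂ) (s : Multiset ℂ), a ≠ 0 →
    Multiset.card (s.filter (fun z => 1 < ‖z‖)) = c →
    ∀ m, Multiset.card s < m → (Mm a s) ^ 2 ≤ Nn m (msP a s) := by
  induction c with
  | zero =>
    intro a s ha hc m hm
    have hall : ∀ z ∈ s, ‖z‖ ≤ 1 := by
      intro z hzs
      by_contra h
      push_neg at h
      have hmem : z ∈ s.filter (fun z => 1 < ‖z‖) := Multiset.mem_filter.2 ⟨hzs, h⟩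
      rw [Multiset.card_eq_zero.1 hc] at hmem
      simp at hmem
    have hM : Mm a s = ‖a‖ := by
      unfold Mm
      rw [Multiset.prod_eq_one, mul_one]
      intro x hx
      rcases Multiset.mem_map.1 hx with ⟨z, hzs, rfl⟩
      exact max_eq_left (hall z hzs)
    rw [hM]
    have h := Finset.single_le_sum (f := fun k => ‖(msP a s).coeff k‖ ^ 2)
      (fun k _ => sq_nonneg _) (Finset.mem_range.2 hm)
    unfold Nn
    rw [msP_coeff_card] at h
    exact h
  | succ c ih =>
    intro a s ha hc m hm
    have hne : s.filter (fun z => 1 < ‖z‖) ≠ 0 := by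
      intro h; rw [h] at hc; simp at hc
    obtain ⟨z, hzf⟩ := Multiset.exists_mem_of_ne_zero hne
    have hz1 : 1 < ‖z‖ := (Multiset.mem_filter.1 hzf).2
    have hzs : z ∈ s := (Multiset.mem_filter.1 hzf).1
    have hz0 : z ≠ 0 := by
      intro h; rw [h, norm_zero] at hz1; linarith
    have hzc : (starRingEnd ℂ) z ≠ 0 := by simpa using hz0
    set s' := s.erase z with hs'
    have hs : s = z ::ₘ s' := (Multiset.cons_erase hzs).symm
    set w := ((starRingEnd ℂ) z)⁻¹ with hwdef
    have hnormconj : ‖(starRingEnd ℂ) z‖ = ‖z‖ := RCLike.norm_conj z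
    have hw : ‖w‖ < 1 := by
      rw [hwdef, norm_inv, hnormconj]
      exact inv_lt_one_of_one_lt₀ hz1
    have hcards : Multiset.card s' + 1 = Multiset.card s := by rw [hs]; simp
    have hc' : Multiset.card (s'.filter (fun z => 1 < ‖z‖)) = c := by
      have h := hc
      rw [hs, Multiset.filter_cons_of_pos (p := fun z : ℂ => 1 < ‖z‖) s' hz1, Multiset.card_cons] at h
      omega
    have ht : Multiset.card ((w ::ₘ s').filter (fun z => 1 < ‖z‖)) = c := by
      rw [Multiset.filter_cons_of_neg (p := fun z : ℂ => 1 < ‖z‖) s' (by simp only [not_lt]; exact hw.le), hc']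
    have hcardt : Multiset.card (w ::ₘ s') = Multiset.card s := by
      rw [Multiset.card_cons, hcards]
    have hIH := ih (a * (starRingEnd ℂ) z) (w ::ₘ s') (mul_ne_zero ha hzc) ht m
      (by rw [hcardt]; exact hm)
    have hMeq : Mm (a * (starRingEnd ℂ) z) (w ::ₘ s') = Mm a s := by
      unfold Mm
      rw [hs, Multiset.map_cons, Multiset.prod_cons, Multiset.map_cons, Multiset.prod_cons,
        norm_mul, max_eq_left hw.le, max_eq_right hz1.le, hnormconj]
      ring
    have e1 : msP a s = (X - C z) * msP a s' := by
      rw [hs]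
      unfold msP
      rw [Multiset.map_cons, Multiset.prod_cons]
      ring
    have e2 : msP (a * (starRingEnd ℂ) z) (w ::ₘ s')
        = (C ((starRingEnd ℂ) z) * X - 1) * msP a s' := by
      unfold msP
      rw [Multiset.map_cons, Multiset.prod_cons, C_mul]
      have hkey : C ((starRingEnd ℂ) z) * (X - C w) = C ((starRingEnd ℂ) z) * X - 1 := by
        rw [mul_sub, ← C_mul, mul_inv_cancel₀ hzc, C_1]
      calc C a * C ((starRingEnd ℂ) z) * ((X - C w) * (Multiset.map (fun z => X - C z) s').prod)
          = (C ((starRingEnd ℂ) z) * (X - C w)) * (C a * (Multiset.map (fun z => X - C z) s').prod) := by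
            ring
        _ = (C ((starRingEnd ℂ) z) * X - 1) * (C a * (Multiset.map (fun z => X - C z) s').prod) := by
            rw [hkey]
    cases m with
    | zero => omega
    | succ m₀ =>
      have hS : (msP a s').coeff m₀ = 0 := by
        apply Polynomial.coeff_eq_zero_of_natDegree_lt
        rw [msP_natDegree ha]
        omega
      have hNeq : Nn (m₀ + 1) (msP a s) = Nn (m₀ + 1) (msP (a * (starRingEnd ℂ) z) (w ::ₘ s')) := by
        unfold Nn
        rw [e1, e2]
        exact flip_N _ z hS
      rw [← hMeq, hNeq]
      exact hIH

open Polynomial Finset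

lemma landau {Q : Polynomial ℂ} (hQ : Q ≠ 0) {m : ℕ} (hm : Q.natDegree < m) :
    (MC Q) ^ 2 ≤ Nn m Q := by
  have h := landau_ms _ Q.leadingCoeff Q.roots (Polynomial.leadingCoeff_ne_zero.2 hQ) rfl m
    (by rw [roots_card_eq hQ]; exact hm)
  rwa [msP_repr hQ] at h

lemma norm_prod_le_maxprod (t : Multiset ℂ) :
    ‖t.prod‖ ≤ (t.map (fun z => max 1 ‖z‖)).prod := by
  induction t using Multiset.induction with
  | empty => simp
  | cons a t ih =>
    rw [Multiset.prod_cons, Multiset.map_cons, Multiset.prod_cons, norm_mul]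
    exact mul_le_mul (le_max_right 1 ‖a‖) ih (norm_nonneg _)
      (le_trans zero_le_one (le_max_left _ _))

lemma maxprod_mono {t s : Multiset ℂ} (h : t ≤ s) :
    (t.map (fun z => max 1 ‖z‖)).prod ≤ (s.map (fun z => max 1 ‖z‖)).prod := by
  obtain ⟨u, rfl⟩ := Multiset.le_iff_exists_add.1 h
  rw [Multiset.map_add, Multiset.prod_add]
  exact le_mul_of_one_le_right (le_trans zero_le_one (one_le_maxprod t)) (one_le_maxprod u)

lemma esymm_bound (s : Multiset ℂ) (j : ℕ) :
    ‖Multiset.esymm s j‖ ≤ ((Multiset.card s).choose j : ℝ) * (s.map (fun z => max 1 ‖z‖)).prod := by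
  rw [Multiset.esymm]
  refine le_trans (norm_multiset_sum_le _) ?_
  calc (((Multiset.powersetCard j s).map Multiset.prod).map (fun x => ‖x‖)).sum
      ≤ (Multiset.card (((Multiset.powersetCard j s).map Multiset.prod).map (fun x => ‖x‖)))
          • ((s.map (fun z => max 1 ‖z‖)).prod) := by
        refine Multiset.sum_le_card_nsmul _ _ ?_
        intro x hx
        rcases Multiset.mem_map.1 hx with ⟨y, hy, rfl⟩
        rcases Multiset.mem_map.1 hy with ⟨t, ht, rfl⟩
        exact le_trans (norm_prod_le_maxprod t) (maxprod_mono (Multiset.mem_powersetCard.1 ht).1)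
    _ = ((Multiset.card s).choose j : ℝ) * (s.map (fun z => max 1 ‖z‖)).prod := by
        rw [Multiset.card_map, Multiset.card_map, Multiset.card_powersetCard, nsmul_eq_mul]

lemma choose_le_two_pow_pred : ∀ (d j : ℕ), d.choose j ≤ 2 ^ (d - 1) := by
  intro d
  induction d with
  | zero => intro j; cases j <;> simp [Nat.choose]
  | succ d ih =>
    intro j
    cases d with
    | zero =>
      cases j with
      | zero => simp
      | succ j =>
        cases j with
        | zero => simp
        | succ j => rw [Nat.choose_eq_zero_of_lt (by omega)]; omega
    | succ e =>
      cases j with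
      | zero => simpa using Nat.one_le_two_pow
      | succ j =>
        rw [Nat.choose_succ_succ]
        have h1 := ih j
        have h2 := ih (j + 1)
        have h3 : 2 ^ e + 2 ^ e = 2 ^ (e + 1) := by rw [pow_succ]; omega
        simp only [Nat.add_sub_cancel, Nat.succ_eq_add_one] at h1 h2 ⊢
        omega

lemma msP_coeff_bound (a : ℂ) (s : Multiset ℂ) (k : ℕ) :
    ‖(msP a s).coeff k‖
      ≤ ((Multiset.card s).choose (Multiset.card s - k) : ℝ) * Mm a s := by
  by_cases ha : a = 0
  · simp [msP, ha, Mm]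
  by_cases hk : k ≤ Multiset.card s
  · rw [msP, coeff_C_mul, norm_mul, Multiset.prod_X_sub_C_coeff s hk, norm_mul, norm_pow,
      norm_neg, norm_one, one_pow, one_mul]
    calc ‖a‖ * ‖Multiset.esymm s (Multiset.card s - k)‖
        ≤ ‖a‖ * (((Multiset.card s).choose (Multiset.card s - k) : ℝ)
            * (s.map (fun z => max 1 ‖z‖)).prod) :=
          mul_le_mul_of_nonneg_left (esymm_bound s _) (norm_nonneg a)
      _ = ((Multiset.card s).choose (Multiset.card s - k) : ℝ) * Mm a s := by
          rw [Mm]; ring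
  · push_neg at hk
    rw [Polynomial.coeff_eq_zero_of_natDegree_lt (by rw [msP_natDegree ha]; exact hk), norm_zero]
    exact mul_nonneg (Nat.cast_nonneg _) (Mm_nonneg a s)

lemma coeff_le_MC {Q : Polynomial ℂ} (hQ : Q ≠ 0) (k : ℕ) :
    ‖Q.coeff k‖ ≤ (2 : ℝ) ^ (Q.natDegree - 1) * MC Q := by
  have h := msP_coeff_bound Q.leadingCoeff Q.roots k
  rw [msP_repr hQ, roots_card_eq hQ] at h
  refine h.trans (mul_le_mul_of_nonneg_right ?_ (MC_nonneg Q))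
  have := choose_le_two_pow_pred Q.natDegree (Q.natDegree - k)
  exact_mod_cast this

open Polynomial Finset

lemma numeric_aux : ∀ m : ℕ, (4:ℝ) ^ m * ((m:ℝ) + 2) < (36/5) ^ (m + 1) := by
  intro m
  induction m with
  | zero => norm_num
  | succ k ih =>
    have h : ((k:ℝ) + 1 + 2) ≤ (3/2) * ((k:ℝ) + 2) := by linarith [Nat.cast_nonneg (α := ℝ) k]
    have h4 : (0:ℝ) < 4 ^ k := by positivity
    calc (4:ℝ) ^ (k+1) * ((k+1:ℕ) + 2)
        = 4 * ((4:ℝ) ^ k * ((k:ℝ) + 1 + 2)) := by push_cast; ring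
      _ ≤ 4 * ((4:ℝ) ^ k * ((3/2) * ((k:ℝ) + 2))) := by nlinarith
      _ = 6 * ((4:ℝ) ^ k * ((k:ℝ) + 2)) := by ring
      _ < 6 * (36/5) ^ (k+1) := by
          have := ih; nlinarith
      _ ≤ (36/5) * (36/5) ^ (k+1) := by
          have : (0:ℝ) < (36/5) ^ (k+1) := by positivity
          nlinarith
      _ = (36/5) ^ (k+1+1) := by ring

lemma exp_one_sq : (36/5 : ℝ) ≤ Real.exp 1 ^ 2 := by
  have h := Real.exp_one_gt_d9
  nlinarith

lemma two_pow_sqrt_lt_exp (n : ℕ) (hn : 1 ≤ n) :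
    (2:ℝ) ^ (n - 1) * Real.sqrt ((n:ℝ) + 1) < Real.exp n := by
  obtain ⟨m, rfl⟩ := Nat.exists_eq_add_of_le hn
  have hidx : 1 + m - 1 = m := by omega
  rw [hidx]
  have hnn : (0:ℝ) ≤ (((1+m:ℕ):ℝ) + 1) := by positivity
  apply lt_of_pow_lt_pow_left₀ 2 (Real.exp_pos _).le
  have hL : ((2:ℝ) ^ m * Real.sqrt (((1+m:ℕ):ℝ) + 1)) ^ 2
      = (4:ℝ) ^ m * (((1+m:ℕ):ℝ) + 1) := by
    rw [mul_pow, Real.sq_sqrt hnn, ← pow_mul, mul_comm m 2, pow_mul]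
    norm_num
  rw [hL]
  have h1 : (4:ℝ) ^ m * (((1+m:ℕ):ℝ) + 1) < (36/5) ^ (m+1) := by
    have := numeric_aux m
    push_cast
    push_cast at this
    nlinarith
  have h2 : ((36:ℝ)/5) ^ (m+1) ≤ (Real.exp 1 ^ 2) ^ (m+1) :=
    pow_le_pow_left₀ (by norm_num) exp_one_sq (m+1)
  have h3 : (Real.exp 1 ^ 2) ^ (m+1) = (Real.exp ((1+m:ℕ):ℝ)) ^ 2 := by
    rw [← Real.exp_one_pow, ← pow_mul, ← pow_mul, mul_comm]
    congr 1
    omega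
  calc (4:ℝ) ^ m * (((1+m:ℕ):ℝ) + 1) < (36/5) ^ (m+1) := h1
    _ ≤ (Real.exp 1 ^ 2) ^ (m+1) := h2
    _ = (Real.exp ((1+m:ℕ):ℝ)) ^ 2 := h3

lemma sum_sub_one_le {ι : Type*} (s : Finset ι) (f : ι → ℕ) :
    ∑ i ∈ s, (f i - 1) ≤ (∑ i ∈ s, f i) - 1 := by
  induction s using Finset.cons_induction with
  | empty => simp
  | cons a s ha ih => rw [Finset.sum_cons, Finset.sum_cons]; omega

/-- **Gelfond's Lemma.** -/
theorem gelfond_lemma (n r : ℕ) (hn : 1 ≤ n) (hr : 1 ≤ r)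
    (P : Fin r → Polynomial ℝ) (hP : ∀ i, P i ≠ 0)
    (hdeg : (∏ i, P i).natDegree ≤ n) :
    Real.exp (-(n : ℝ)) * ∏ i, heightR (P i) < heightR (∏ i, P i) ∧
      heightR (∏ i, P i) < Real.exp (n : ℝ) * ∏ i, heightR (P i) := by
  classical
  have hQ0 : (∏ i, P i) ≠ 0 := Finset.prod_ne_zero_iff.2 fun i _ => hP i
  have hHQ : 0 < heightR (∏ i, P i) := heightR_pos hQ0
  have hprodH : 0 < ∏ i, heightR (P i) := Finset.prod_pos fun i _ => heightR_pos (hP i)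
  have hsumdeg : ∑ i, (P i).natDegree = (∏ i, P i).natDegree :=
    (Polynomial.natDegree_prod _ _ fun i _ => hP i).symm
  have h2lte : (2:ℝ) < Real.exp 1 := by have := Real.exp_one_gt_d9; linarith
  -- Upper bound
  have hup : heightR (∏ i, P i) < Real.exp (n : ℝ) * ∏ i, heightR (P i) := by
    have h1 := heightR_prod_le Finset.univ P
    have h3 : (∏ i, ((P i).natDegree + 1)) ≤ 2 ^ n := by
      calc ∏ i, ((P i).natDegree + 1) ≤ ∏ i, 2 ^ (P i).natDegree :=
            Finset.prod_le_prod' fun i _ => Nat.lt_two_pow_self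
        _ = 2 ^ (∑ i, (P i).natDegree) := Finset.prod_pow_eq_pow_sum _ _ _
        _ ≤ 2 ^ n := Nat.pow_le_pow_right (by norm_num) (by rw [hsumdeg]; exact hdeg)
    have h3' : (∏ i, (((P i).natDegree : ℝ) + 1)) ≤ (2:ℝ) ^ n := by
      have := h3
      have hcast : ((∏ i, ((P i).natDegree + 1) : ℕ) : ℝ) = ∏ i, (((P i).natDegree : ℝ) + 1) := by
        push_cast; rfl
      calc (∏ i, (((P i).natDegree : ℝ) + 1)) = ((∏ i, ((P i).natDegree + 1) : ℕ) : ℝ) :=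
            hcast.symm
        _ ≤ ((2 ^ n : ℕ) : ℝ) := by exact_mod_cast this
        _ = (2:ℝ) ^ n := by push_cast; rfl
    have h4 : (2:ℝ) ^ n < Real.exp (n : ℝ) := by
      rw [← Real.exp_one_pow]
      exact pow_lt_pow_left₀ h2lte (by norm_num) (by omega)
    calc heightR (∏ i, P i) ≤ ∏ i, (((P i).natDegree + 1 : ℝ) * heightR (P i)) := h1
      _ = (∏ i, (((P i).natDegree : ℝ) + 1)) * ∏ i, heightR (P i) := by
          rw [← Finset.prod_mul_distrib]
      _ ≤ (2:ℝ) ^ n * ∏ i, heightR (P i) :=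
          mul_le_mul_of_nonneg_right h3' (le_of_lt hprodH)
      _ < Real.exp (n : ℝ) * ∏ i, heightR (P i) :=
          mul_lt_mul_of_pos_right h4 hprodH
  -- Lower bound
  have hPc0 : ∀ i, (P i).map Complex.ofRealHom ≠ 0 := fun i => Polynomial.map_ne_zero (hP i)
  have hQc0 : (∏ i, P i).map Complex.ofRealHom ≠ 0 := Polynomial.map_ne_zero hQ0
  have hcoeff : ∀ (R : Polynomial ℝ) (k : ℕ), ‖(R.map Complex.ofRealHom).coeff k‖ = |R.coeff k| := by
    intro R k
    rw [Polynomial.coeff_map]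
    exact (Complex.norm_real _).trans (Real.norm_eq_abs _)
  have hQc : (∏ i, P i).map Complex.ofRealHom = ∏ i, (P i).map Complex.ofRealHom :=
    Polynomial.map_prod _ _ _
  have step1 : ∀ i, heightR (P i)
      ≤ (2:ℝ) ^ ((P i).natDegree - 1) * MC ((P i).map Complex.ofRealHom) := by
    intro i
    apply heightR_le
    intro k
    rw [← hcoeff (P i) k]
    have h := coeff_le_MC (hPc0 i) k
    rwa [Polynomial.natDegree_map] at h
  have step2 : (∏ i, heightR (P i))
      ≤ (2:ℝ) ^ (n - 1) * MC ((∏ i, P i).map Complex.ofRealHom) := by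
    calc ∏ i, heightR (P i)
        ≤ ∏ i, ((2:ℝ) ^ ((P i).natDegree - 1) * MC ((P i).map Complex.ofRealHom)) :=
          Finset.prod_le_prod (fun i _ => heightR_nonneg _) (fun i _ => step1 i)
      _ = (∏ i, (2:ℝ) ^ ((P i).natDegree - 1)) * ∏ i, MC ((P i).map Complex.ofRealHom) :=
          Finset.prod_mul_distrib
      _ = (2:ℝ) ^ (∑ i, ((P i).natDegree - 1)) * MC ((∏ i, P i).map Complex.ofRealHom) := by
          rw [Finset.prod_pow_eq_pow_sum, hQc, MC_prod _ _ (fun i _ => hPc0 i)]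
      _ ≤ (2:ℝ) ^ (n - 1) * MC ((∏ i, P i).map Complex.ofRealHom) := by
          refine mul_le_mul_of_nonneg_right ?_ (MC_nonneg _)
          refine pow_le_pow_right₀ (by norm_num) ?_
          have h := sum_sub_one_le Finset.univ (fun i => (P i).natDegree)
          omega
  have hQcdeg : ((∏ i, P i).map Complex.ofRealHom).natDegree = (∏ i, P i).natDegree :=
    Polynomial.natDegree_map _
  have step3 : MC ((∏ i, P i).map Complex.ofRealHom)
      ≤ Real.sqrt ((n:ℝ) + 1) * heightR (∏ i, P i) := by
    have hland := landau hQc0 (m := n + 1) (by rw [hQcdeg]; omega)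
    have hNn : Nn (n + 1) ((∏ i, P i).map Complex.ofRealHom)
        ≤ ((n:ℝ) + 1) * heightR (∏ i, P i) ^ 2 := by
      unfold Nn
      calc ∑ k ∈ Finset.range (n+1), ‖((∏ i, P i).map Complex.ofRealHom).coeff k‖ ^ 2
          ≤ ∑ _k ∈ Finset.range (n+1), heightR (∏ i, P i) ^ 2 := by
            refine Finset.sum_le_sum fun k _ => ?_
            rw [hcoeff]
            exact pow_le_pow_left₀ (abs_nonneg _) (abs_coeff_le_heightR _ k) 2
        _ = ((n:ℝ) + 1) * heightR (∏ i, P i) ^ 2 := by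
            rw [Finset.sum_const, Finset.card_range, nsmul_eq_mul]; push_cast; ring
    have hsq : MC ((∏ i, P i).map Complex.ofRealHom) ^ 2
        ≤ ((n:ℝ) + 1) * heightR (∏ i, P i) ^ 2 := le_trans hland hNn
    calc MC ((∏ i, P i).map Complex.ofRealHom)
        = Real.sqrt (MC ((∏ i, P i).map Complex.ofRealHom) ^ 2) :=
          (Real.sqrt_sq (MC_nonneg _)).symm
      _ ≤ Real.sqrt (((n:ℝ) + 1) * heightR (∏ i, P i) ^ 2) := Real.sqrt_le_sqrt hsq
      _ = Real.sqrt ((n:ℝ) + 1) * heightR (∏ i, P i) := by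
          rw [Real.sqrt_mul (by positivity), Real.sqrt_sq (le_of_lt hHQ)]
  have hlow : (∏ i, heightR (P i)) < Real.exp (n : ℝ) * heightR (∏ i, P i) := by
    calc ∏ i, heightR (P i)
        ≤ (2:ℝ) ^ (n - 1) * MC ((∏ i, P i).map Complex.ofRealHom) := step2
      _ ≤ (2:ℝ) ^ (n - 1) * (Real.sqrt ((n:ℝ) + 1) * heightR (∏ i, P i)) :=
          mul_le_mul_of_nonneg_left step3 (by positivity)
      _ = ((2:ℝ) ^ (n - 1) * Real.sqrt ((n:ℝ) + 1)) * heightR (∏ i, P i) := by ring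
      _ < Real.exp (n : ℝ) * heightR (∏ i, P i) :=
          mul_lt_mul_of_pos_right (two_pow_sqrt_lt_exp n hn) hHQ
  refine ⟨?_, hup⟩
  calc Real.exp (-(n : ℝ)) * ∏ i, heightR (P i)
      < Real.exp (-(n : ℝ)) * (Real.exp (n : ℝ) * heightR (∏ i, P i)) :=
        mul_lt_mul_of_pos_left hlow (Real.exp_pos _)
    _ = heightR (∏ i, P i) := by rw [← mul_assoc, ← Real.exp_add]; simp
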